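/- Let D be a probability distribution over ℝⁿ × {0,1}, and for each subset S ⊆ {1, ..., n} let q_S(x) = P(Y = 1 | X_S = x_S) denote (a regular version of) the conditional probability that Y = 1 given the coordinates of X in S. For s ≥ 1, consider the function class F = {x ↦ 1{q_S(x) ≥ c} : S ⊆ {1, ..., n}, |S| ≤ s, c ∈ [0,1]}. Then the VC dimension of F is at most 1 + 2·s·log₂(n + 1); equivalently, no set of more than 1 + 2·s·log₂(n + 1) points in ℝⁿ is shattered by F. -/

import Mathlib

open MeasureTheory ProbabilityTheory Set

noncomputable section

/-- The loss with false-positive cost `c` and false-negative cost `1 - c`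
(`true` encodes the decision/label `1`, `false` encodes `0`). -/
def idtLoss (c : ℝ) (yhat y : Bool) : ℝ :=
  if yhat = y then 0 else if yhat = true then c else 1 - c

/-- The risk of decision rule `h` on distribution `D` with loss parameter `c`. -/
def risk {X : Type*} [MeasurableSpace X] (D : Measure (X × Bool)) (c : ℝ) (h : X → Bool) : ℝ :=
  ∫ p, idtLoss c (h p.1) p.2 ∂D

/-- `q` is a version of the posterior probability `x ↦ P(Y = 1 ∣ X = x)` for `D`. -/
def IsPosterior {X : Type*} [MeasurableSpace X] (D : Measure (X × Bool)) (q : X → ℝ) : Prop :=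
  Measurable q ∧ ∀ A : Set X, MeasurableSet A →
    ∫ x in A, q x ∂(D.map Prod.fst) = (D (A ×ˢ ({true} : Set Bool))).toReal

/-- A hypothesis class is monotone if any two of its members are pointwise comparable. -/
def ClassMonotone {X : Type*} (H : Set (X → Bool)) : Prop :=
  ∀ h ∈ H, ∀ h' ∈ H, (∀ x, h' x ≤ h x) ∨ (∀ x, h x ≤ h' x)

/-- The optimal subset of a hypothesis class: rules that are risk-minimizers in `H`
for some loss parameter `c ∈ (0,1)`. -/
def optSubset {X : Type*} [MeasurableSpace X] (D : Measure (X × Bool))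
    (H : Set (X → Bool)) : Set (X → Bool) :=
  {h | h ∈ H ∧ ∃ c ∈ Set.Ioo (0 : ℝ) 1, ∀ h' ∈ H, risk D c h ≤ risk D c h'}

/-- The induced posterior probability associated with a family `hfam` of optimal rules
(`hfam c` optimal in the class for loss parameter `c`). -/
def inducedPosterior {X : Type*} (hfam : ℝ → (X → Bool)) (x : X) : ℝ :=
  sSup ({c | c ∈ Set.Icc (0 : ℝ) 1 ∧ hfam c x = true} ∪ {0})

/-- Minimum disagreement between a rule `h` and a hypothesis class `H'`. -/
def MDis {X : Type*} [MeasurableSpace X] (D : Measure (X × Bool)) (h : X → Bool)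
    (H' : Set (X → Bool)) : ENNReal :=
  ⨅ h' ∈ H', D.map Prod.fst {x | h' x ≠ h x}

/-- `(hfam c, 𝓗)` is `α`-MD-smooth (where `hfam c'` is an optimal rule in the observed
decision maker's class for loss parameter `c'`). -/
def MDSmooth {X : Type*} [MeasurableSpace X] (D : Measure (X × Bool))
    (𝓗 : Set (Set (X → Bool))) (hfam : ℝ → (X → Bool)) (c α : ℝ) : Prop :=
  (∀ H' ∈ 𝓗, ClassMonotone (optSubset D H')) ∧
  ∀ H' ∈ 𝓗, ∀ c' ∈ Set.Ioo (0 : ℝ) 1,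
    MDis D (hfam c') (optSubset D H') ≤
      ENNReal.ofReal (1 + α * |c' - c|) * MDis D (hfam c) (optSubset D H')

/-- `F` shatters the finite set `A` of points. -/
def Shatters {X : Type*} (F : Set (X → Bool)) (A : Finset X) : Prop :=
  ∀ g : X → Bool, ∃ f ∈ F, ∀ x ∈ A, f x = g x

lemma aux_sq_le_pow : ∀ m : ℕ, 4 ≤ m → (m + 1) ^ 2 ≤ 2 ^ (m + 1) := by
  intro m hm
  induction m with
  | zero => omega
  | succ k ih =>
    rcases Nat.lt_or_ge k 4 with hk | hk
    · have hk3 : k = 3 := by omega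
      subst hk3; norm_num
    · have h1 := ih (by omega)
      have : (k + 2) ^ 2 ≤ 2 * (k + 1) ^ 2 := by nlinarith
      calc (k + 1 + 1) ^ 2 ≤ 2 * (k + 1) ^ 2 := this
        _ ≤ 2 * 2 ^ (k + 1) := by omega
        _ = 2 ^ (k + 1 + 1) := by ring

lemma aux_count (m K : ℕ) (hK : 2 ≤ K) (h : 2 ^ m ≤ K * (m + 1)) :
    2 ^ m ≤ 2 * K ^ 2 := by
  rcases le_or_gt (m + 1) (2 * K) with hm | hm
  · calc 2 ^ m ≤ K * (m + 1) := h
      _ ≤ K * (2 * K) := Nat.mul_le_mul_left _ hm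
      _ = 2 * K ^ 2 := by ring
  · exfalso
    have hm4 : 4 ≤ m := by omega
    have h2 : 2 ^ (m + 1) ≤ 2 * K * (m + 1) := by
      calc 2 ^ (m + 1) = 2 * 2 ^ m := by ring
        _ ≤ 2 * (K * (m + 1)) := by omega
        _ = 2 * K * (m + 1) := by ring
    have h3 : 2 * K * (m + 1) ≤ m * (m + 1) := Nat.mul_le_mul_right _ (by omega)
    have h4 := aux_sq_le_pow m hm4
    nlinarith

lemma aux_nsets (n s : ℕ) :
    ((Finset.univ : Finset (Finset (Fin n))).filter (fun S => S.card ≤ s)).card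
      ≤ (n + 1) ^ s := by
  classical
  have : ((Finset.univ : Finset (Finset (Fin n))).filter (fun S => S.card ≤ s)).card
      ≤ (Finset.univ : Finset (Fin s → Option (Fin n))).card := by
    apply Finset.card_le_card_of_injOn
      (fun S => fun i : Fin s => (S.sort (· ≤ ·))[(i : ℕ)]?)
    · intro _ _; exact Finset.mem_univ _
    · intro S hS T hT hfeq
      simp only [Finset.coe_filter, Set.mem_setOf_eq, Finset.mem_univ, true_and] at hS hT
      have hlen : ∀ U : Finset (Fin n), (U.sort (· ≤ ·)).length = U.card :=
        fun U => Finset.length_sort _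
      have hlist : S.sort (· ≤ ·) = T.sort (· ≤ ·) := by
        apply List.ext_getElem?
        intro i
        rcases Nat.lt_or_ge i s with hi | hi
        · exact congrFun hfeq ⟨i, hi⟩
        · rw [List.getElem?_eq_none (by rw [hlen]; omega),
            List.getElem?_eq_none (by rw [hlen]; omega)]
      have := congrArg List.toFinset hlist
      rwa [Finset.sort_toFinset, Finset.sort_toFinset] at this
  refine this.trans ?_
  rw [Finset.card_univ, Fintype.card_fun]
  simp [Nat.add_comm]


/-- VC dimension of threshold rules on conditional probabilities
given at most `s` of `n` features is at most `1 + 2 s log₂(n+1)`. -/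
theorem stmt_17 (n : ℕ) (D : Measure ((Fin n → ℝ) × Bool)) [IsProbabilityMeasure D]
    (s : ℕ) (hs : 1 ≤ s)
    (qS : Finset (Fin n) → (Fin n → ℝ) → ℝ)
    (hqS : ∀ S : Finset (Fin n),
      (fun p : (Fin n → ℝ) × Bool => qS S p.1) =ᵐ[D]
        D[(fun p : (Fin n → ℝ) × Bool => if p.2 = true then (1 : ℝ) else 0) |
          MeasurableSpace.comap
            (fun p : (Fin n → ℝ) × Bool => fun i : Fin n => if i ∈ S then p.1 i else 0)
            inferInstance]) :
    ∀ A : Finset (Fin n → ℝ),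
      Shatters {h : (Fin n → ℝ) → Bool |
          ∃ (S : Finset (Fin n)) (c : ℝ), S.card ≤ s ∧ c ∈ Set.Icc (0 : ℝ) 1 ∧
            h = fun x => decide (c ≤ qS S x)} A →
      (A.card : ℝ) ≤ 1 + 2 * s * Real.logb 2 ((n : ℝ) + 1) := by
  intro A hA
  classical
  rcases Nat.eq_zero_or_pos n with hn | hn
  · subst hn
    have hA1 : A.card ≤ 1 :=
      Finset.card_le_one.mpr (fun a _ b _ => funext fun i => i.elim0)
    have hlog : Real.logb 2 ((0:ℕ):ℝ) = 0 := by simp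
    simp only [Nat.cast_zero, zero_add, Real.logb_one, mul_zero, add_zero]
    exact_mod_cast hA1
  -- choose a subset and threshold representing each labeling
  have hch : ∀ B : Finset (Fin n → ℝ), ∃ S : Finset (Fin n), ∃ c : ℝ,
      S.card ≤ s ∧ B ∩ A = A.filter (fun x => c ≤ qS S x) := by
    intro B
    obtain ⟨f, hfF, hfB⟩ := hA (fun x => decide (x ∈ B))
    obtain ⟨S, c, hcard, hc, hfeq⟩ := hfF
    refine ⟨S, c, hcard, ?_⟩
    ext x
    simp only [Finset.mem_inter, Finset.mem_filter]
    constructor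
    · rintro ⟨hxB, hxA⟩
      have h1 := hfB x hxA
      rw [hfeq] at h1
      exact ⟨hxA, of_decide_eq_true (h1.trans (decide_eq_true hxB))⟩
    · rintro ⟨hxA, hxq⟩
      have h1 := hfB x hxA
      rw [hfeq] at h1
      exact ⟨of_decide_eq_true (h1.symm.trans (decide_eq_true hxq)), hxA⟩
  choose Sb cb hScard hBfilter using hch
  -- injective map from powerset of A
  set T : Finset (Finset (Fin n) × ℕ) :=
    ((Finset.univ : Finset (Finset (Fin n))).filter (fun S => S.card ≤ s)) ×ˢ
      Finset.range (A.card + 1) with hT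
  have hinj : A.powerset.card ≤ T.card := by
    apply Finset.card_le_card_of_injOn (fun B => (Sb B, B.card))
    · intro B hB
      rw [Finset.mem_coe, Finset.mem_powerset] at hB
      rw [Finset.mem_coe, hT, Finset.mem_product]
      refine ⟨Finset.mem_filter.mpr ⟨Finset.mem_univ _, hScard B⟩, ?_⟩
      rw [Finset.mem_range]
      exact Nat.lt_succ_of_le (Finset.card_le_card hB)
    · intro B hB B' hB' heq
      simp only [Finset.mem_coe, Finset.mem_powerset] at hB hB'
      have hS : Sb B = Sb B' := congrArg Prod.fst heq
      have hcard : B.card = B'.card := congrArg Prod.snd heq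
      have e1 : B = A.filter (fun x => cb B ≤ qS (Sb B) x) := by
        rw [← hBfilter B, Finset.inter_eq_left.mpr hB]
      have e2 : B' = A.filter (fun x => cb B' ≤ qS (Sb B) x) := by
        rw [hS, ← hBfilter B', Finset.inter_eq_left.mpr hB']
      rcases le_total (cb B) (cb B') with hc | hc
      · have hsub : B' ⊆ B := by
          rw [e1, e2]
          intro x hx
          rw [Finset.mem_filter] at hx ⊢
          exact ⟨hx.1, le_trans hc hx.2⟩
        exact (Finset.eq_of_subset_of_card_le hsub (le_of_eq hcard)).symm
      · have hsub : B ⊆ B' := by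
          rw [e1, e2]
          intro x hx
          rw [Finset.mem_filter] at hx ⊢
          exact ⟨hx.1, le_trans hc hx.2⟩
        exact Finset.eq_of_subset_of_card_le hsub (ge_of_eq hcard)
  have hcount : 2 ^ A.card ≤ (n + 1) ^ s * (A.card + 1) := by
    have hTcard : T.card ≤ (n + 1) ^ s * (A.card + 1) := by
      rw [hT, Finset.card_product, Finset.card_range]
      exact Nat.mul_le_mul_right _ (aux_nsets n s)
    calc 2 ^ A.card = A.powerset.card := (Finset.card_powerset A).symm
      _ ≤ T.card := hinj
      _ ≤ _ := hTcard
  have hK : 2 ≤ (n + 1) ^ s := by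
    calc 2 ≤ n + 1 := by omega
      _ ≤ (n + 1) ^ s := Nat.le_self_pow (by omega) _
  have hfin : 2 ^ A.card ≤ 2 * (n + 1) ^ (2 * s) := by
    have := aux_count A.card ((n + 1) ^ s) hK hcount
    calc 2 ^ A.card ≤ 2 * ((n + 1) ^ s) ^ 2 := this
      _ = 2 * (n + 1) ^ (2 * s) := by rw [← pow_mul, mul_comm s 2]
  -- pass to reals and take logarithms
  have hreal : (2:ℝ) ^ A.card ≤ 2 * ((n:ℝ) + 1) ^ (2 * s) := by
    exact_mod_cast hfin
  have hb : (1:ℝ) < 2 := one_lt_two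
  have hx : (0:ℝ) < 2 ^ A.card := by positivity
  have hy : (0:ℝ) < 2 * ((n:ℝ) + 1) ^ (2 * s) := by positivity
  have hlog := (Real.logb_le_logb hb hx hy).mpr hreal
  have h1 : Real.logb 2 ((2:ℝ) ^ A.card) = A.card := by
    rw [Real.logb_pow]
    simp
  have h2 : Real.logb 2 (2 * ((n:ℝ) + 1) ^ (2 * s))
      = 1 + 2 * s * Real.logb 2 ((n:ℝ) + 1) := by
    rw [Real.logb_mul (by norm_num)
      (by positivity : (0:ℝ) < ((n:ℝ) + 1) ^ (2 * s)).ne', Real.logb_pow,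
      Real.logb_self_eq_one one_lt_two]
    push_cast
    ring
  rw [h1, h2] at hlog
  exact hlog
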